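/- Under the hypotheses of Iwatani's theorem (H ∈ S^{2,0}⊗W with Bochner-flat γ(H,H)), if the asymptotic subspace {v : H(v,v)=0} has complex codimension k in C^n, then m ≥ (1/2) k (2n − k + 1). -/

import Mathlib

namespace IwataniAux


open Complex in
private lemma extract11 (c00 c10 c01 c20 c11 c02 c21 c12 c22 : ℂ)
    (hc : ∀ t : ℂ, c00 + c10*t + c01*(starRingEnd ℂ) t + c20*t^2 + c11*(t*(starRingEnd ℂ) t)
      + c02*((starRingEnd ℂ) t)^2 + c21*(t^2*(starRingEnd ℂ) t) + c12*(t*((starRingEnd ℂ) t)^2)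
      + c22*(t^2*((starRingEnd ℂ) t)^2) = 0) : c11 = 0 := by
  have h0 := hc 0
  have h1 := hc (-2*I)
  have h2 := hc (2-2*I)
  have h3 := hc (2-I)
  have h4 := hc I
  have h5 := hc (-1-I)
  have h6 := hc (1+I)
  simp only [map_sub, map_add, map_mul, map_neg, map_one, map_ofNat, Complex.conj_I, map_zero] at h0 h1 h2 h3 h4 h5 h6
  linear_combination (-5/8 : ℂ) * h0 + (1/12 : ℂ) * h1 + (-1/8 : ℂ) * h2 + (1/4 : ℂ) * h3
    + (5/12 : ℂ) * h4 + (1/8 : ℂ) * h5 + (-1/8 : ℂ) * h6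
    + (c11/2 - c20/2 - c02/2 - 2*c22 + c21*(-3+I)/4 + c12*(-3-I)/4) * Complex.I_sq

open Complex in
private lemma extract10 (c00 c10 c01 c11 : ℂ)
    (hc : ∀ t : ℂ, c00 + c10*t + c01*(starRingEnd ℂ) t + c11*(t*(starRingEnd ℂ) t) = 0) :
    c10 = 0 := by
  have h1 := hc 1
  have h2 := hc (-1)
  have h3 := hc I
  simp only [map_neg, map_one, Complex.conj_I] at h1 h2 h3
  linear_combination ((1+I)/4) * h1 + ((I-1)/4) * h2 + (-I/2) * h3 + ((c10 - c01 - I*c11)/2) * Complex.I_sq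


open Finset

variable {n : ℕ}

private noncomputable def bilf (M : Fin n → Fin n → ℂ) (x y : Fin n → ℂ) : ℂ := ∑ i, ∑ j, M i j * x i * y j
private noncomputable def ipf (x y : Fin n → ℂ) : ℂ := ∑ i, x i * (starRingEnd ℂ) (y i)
private noncomputable def hff (M : Fin n → Fin n → ℂ) (x y : Fin n → ℂ) : ℂ :=
  ∑ i, ∑ j, M i j * x i * (starRingEnd ℂ) (y j)

private lemma bilf_expand (M : Fin n → Fin n → ℂ) (x u y v : Fin n → ℂ) (s r : ℂ) :
    bilf M (x + s • u) (y + r • v)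
      = bilf M x y + s * bilf M u y + r * bilf M x v + s * r * bilf M u v := by
  unfold bilf
  rw [Finset.mul_sum, Finset.mul_sum, Finset.mul_sum, ← Finset.sum_add_distrib,
    ← Finset.sum_add_distrib, ← Finset.sum_add_distrib]
  refine Finset.sum_congr rfl fun i _ => ?_
  rw [Finset.mul_sum, Finset.mul_sum, Finset.mul_sum, ← Finset.sum_add_distrib,
    ← Finset.sum_add_distrib, ← Finset.sum_add_distrib]
  refine Finset.sum_congr rfl fun j _ => ?_
  simp only [Pi.add_apply, Pi.smul_apply, smul_eq_mul]
  ring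

private lemma ipf_expand (x u y v : Fin n → ℂ) (s r : ℂ) :
    ipf (x + s • u) (y + r • v)
      = ipf x y + s * ipf u y + (starRingEnd ℂ) r * ipf x v
        + s * (starRingEnd ℂ) r * ipf u v := by
  unfold ipf
  rw [Finset.mul_sum, Finset.mul_sum, Finset.mul_sum, ← Finset.sum_add_distrib,
    ← Finset.sum_add_distrib, ← Finset.sum_add_distrib]
  refine Finset.sum_congr rfl fun i _ => ?_
  simp only [Pi.add_apply, Pi.smul_apply, smul_eq_mul, map_add, map_mul]
  ring

private lemma hff_expand (M : Fin n → Fin n → ℂ) (x u y v : Fin n → ℂ) (s r : ℂ) :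
    hff M (x + s • u) (y + r • v)
      = hff M x y + s * hff M u y + (starRingEnd ℂ) r * hff M x v
        + s * (starRingEnd ℂ) r * hff M u v := by
  unfold hff
  rw [Finset.mul_sum, Finset.mul_sum, Finset.mul_sum, ← Finset.sum_add_distrib,
    ← Finset.sum_add_distrib, ← Finset.sum_add_distrib]
  refine Finset.sum_congr rfl fun i _ => ?_
  rw [Finset.mul_sum, Finset.mul_sum, Finset.mul_sum, ← Finset.sum_add_distrib,
    ← Finset.sum_add_distrib, ← Finset.sum_add_distrib]
  refine Finset.sum_congr rfl fun j _ => ?_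
  simp only [Pi.add_apply, Pi.smul_apply, smul_eq_mul, map_add, map_mul]
  ring



private lemma bilf_expand_left (M : Fin n → Fin n → ℂ) (x u y : Fin n → ℂ) (s : ℂ) :
    bilf M (x + s • u) y = bilf M x y + s * bilf M u y := by
  unfold bilf
  rw [Finset.mul_sum, ← Finset.sum_add_distrib]
  refine Finset.sum_congr rfl fun i _ => ?_
  rw [Finset.mul_sum, ← Finset.sum_add_distrib]
  refine Finset.sum_congr rfl fun j _ => ?_
  simp only [Pi.add_apply, Pi.smul_apply, smul_eq_mul]
  ring

private lemma bilf_expand_right (M : Fin n → Fin n → ℂ) (x y v : Fin n → ℂ) (r : ℂ) :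
    bilf M x (y + r • v) = bilf M x y + r * bilf M x v := by
  unfold bilf
  rw [Finset.mul_sum, ← Finset.sum_add_distrib]
  refine Finset.sum_congr rfl fun i _ => ?_
  rw [Finset.mul_sum, ← Finset.sum_add_distrib]
  refine Finset.sum_congr rfl fun j _ => ?_
  simp only [Pi.add_apply, Pi.smul_apply, smul_eq_mul]
  ring

private lemma ipf_expand_left (x u y : Fin n → ℂ) (s : ℂ) :
    ipf (x + s • u) y = ipf x y + s * ipf u y := by
  unfold ipf
  rw [Finset.mul_sum, ← Finset.sum_add_distrib]
  refine Finset.sum_congr rfl fun i _ => ?_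
  simp only [Pi.add_apply, Pi.smul_apply, smul_eq_mul]
  ring

private lemma ipf_expand_right (x y v : Fin n → ℂ) (r : ℂ) :
    ipf x (y + r • v) = ipf x y + (starRingEnd ℂ) r * ipf x v := by
  unfold ipf
  rw [Finset.mul_sum, ← Finset.sum_add_distrib]
  refine Finset.sum_congr rfl fun i _ => ?_
  simp only [Pi.add_apply, Pi.smul_apply, smul_eq_mul, map_add, map_mul]
  ring

private lemma hff_expand_left (M : Fin n → Fin n → ℂ) (x u y : Fin n → ℂ) (s : ℂ) :
    hff M (x + s • u) y = hff M x y + s * hff M u y := by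
  unfold hff
  rw [Finset.mul_sum, ← Finset.sum_add_distrib]
  refine Finset.sum_congr rfl fun i _ => ?_
  rw [Finset.mul_sum, ← Finset.sum_add_distrib]
  refine Finset.sum_congr rfl fun j _ => ?_
  simp only [Pi.add_apply, Pi.smul_apply, smul_eq_mul]
  ring

private lemma hff_expand_right (M : Fin n → Fin n → ℂ) (x y v : Fin n → ℂ) (r : ℂ) :
    hff M x (y + r • v) = hff M x y + (starRingEnd ℂ) r * hff M x v := by
  unfold hff
  rw [Finset.mul_sum, ← Finset.sum_add_distrib]
  refine Finset.sum_congr rfl fun i _ => ?_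
  rw [Finset.mul_sum, ← Finset.sum_add_distrib]
  refine Finset.sum_congr rfl fun j _ => ?_
  simp only [Pi.add_apply, Pi.smul_apply, smul_eq_mul, map_add, map_mul]
  ring

private lemma grp (A B1 B2 C A' B1' B2' C' t s : ℂ) :
    (A + t * B1 + t * B2 + t * t * C) * (A' + s * B1' + s * B2' + s * s * C')
      = A * A' + (B2 + B1) * A' * t + A * (B2' + B1') * s + C * A' * t ^ 2
        + (B2 + B1) * (B2' + B1') * (t * s) + A * C' * s ^ 2
        + C * (B2' + B1') * (t ^ 2 * s) + (B2 + B1) * C' * (t * s ^ 2)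
        + C * C' * (t ^ 2 * s ^ 2) := by ring

private lemma grp2 (a1 b1 a2 b2 a1' b1' a2' b2' s s' : ℂ) :
    (a1 + s * b1 + (a2 + s * b2)) * (a1' + s' * b1' + (a2' + s' * b2'))
      = (a1 + a2) * (a1' + a2') + (b1 + b2) * (a1' + a2') * s
        + (a1 + a2) * (b1' + b2') * s' + (b1 + b2) * (b1' + b2') * (s * s') := by ring

open ComplexConjugate in
private lemma polar1 {m : ℕ} (H : Fin m → Fin n → Fin n → ℂ) (h : Fin n → Fin n → ℂ)
    (hflat : ∀ z : Fin n → ℂ,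
      ∑ α, bilf (H α) z z * conj (bilf (H α) z z) = ipf z z * hff h z z)
    (x y : Fin n → ℂ) :
    ∑ α, (bilf (H α) x y + bilf (H α) y x) * (conj (bilf (H α) x y) + conj (bilf (H α) y x))
      = ipf y y * hff h x x + ipf y x * hff h x y + ipf x y * hff h y x
        + ipf x x * hff h y y := by
  have key := extract11
    ((∑ α, bilf (H α) x x * conj (bilf (H α) x x)) - ipf x x * hff h x x)
    ((∑ α, (bilf (H α) x y + bilf (H α) y x) * conj (bilf (H α) x x))
      - (ipf y x * hff h x x + ipf x x * hff h y x))
    ((∑ α, bilf (H α) x x * (conj (bilf (H α) x y) + conj (bilf (H α) y x)))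
      - (ipf x y * hff h x x + ipf x x * hff h x y))
    ((∑ α, bilf (H α) y y * conj (bilf (H α) x x)) - ipf y x * hff h y x)
    ((∑ α, (bilf (H α) x y + bilf (H α) y x) * (conj (bilf (H α) x y) + conj (bilf (H α) y x)))
      - (ipf y y * hff h x x + ipf y x * hff h x y + ipf x y * hff h y x + ipf x x * hff h y y))
    ((∑ α, bilf (H α) x x * conj (bilf (H α) y y)) - ipf x y * hff h x y)
    ((∑ α, bilf (H α) y y * (conj (bilf (H α) x y) + conj (bilf (H α) y x)))
      - (ipf y y * hff h y x + ipf y x * hff h y y))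
    ((∑ α, (bilf (H α) x y + bilf (H α) y x) * conj (bilf (H α) y y))
      - (ipf y y * hff h x y + ipf x y * hff h y y))
    ((∑ α, bilf (H α) y y * conj (bilf (H α) y y)) - ipf y y * hff h y y)
    ?_
  · linear_combination key
  · intro t
    have hz := hflat (x + t • y)
    simp only [bilf_expand, ipf_expand, hff_expand, map_add, map_mul] at hz
    simp only [grp, Finset.sum_add_distrib, ← Finset.sum_mul] at hz
    linear_combination hz

open ComplexConjugate in
private lemma polar2 {m : ℕ} (H : Fin m → Fin n → Fin n → ℂ) (h : Fin n → Fin n → ℂ)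
    (hflat : ∀ z : Fin n → ℂ,
      ∑ α, bilf (H α) z z * conj (bilf (H α) z z) = ipf z z * hff h z z)
    (u x y : Fin n → ℂ) :
    ∑ α, (bilf (H α) u y + bilf (H α) y u) * (conj (bilf (H α) x y) + conj (bilf (H α) y x))
      = ipf y y * hff h u x + ipf y x * hff h u y + ipf u y * hff h y x
        + ipf u x * hff h y y := by
  have key := extract10
    ((∑ α, (bilf (H α) x y + bilf (H α) y x) * (conj (bilf (H α) x y) + conj (bilf (H α) y x)))
      - (ipf y y * hff h x x + ipf y x * hff h x y + ipf x y * hff h y x + ipf x x * hff h y y))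
    ((∑ α, (bilf (H α) u y + bilf (H α) y u) * (conj (bilf (H α) x y) + conj (bilf (H α) y x)))
      - (ipf y y * hff h u x + ipf y x * hff h u y + ipf u y * hff h y x + ipf u x * hff h y y))
    ((∑ α, (bilf (H α) x y + bilf (H α) y x) * (conj (bilf (H α) u y) + conj (bilf (H α) y u)))
      - (ipf y y * hff h x u + ipf y u * hff h x y + ipf x y * hff h y u + ipf x u * hff h y y))
    ((∑ α, (bilf (H α) u y + bilf (H α) y u) * (conj (bilf (H α) u y) + conj (bilf (H α) y u)))
      - (ipf y y * hff h u u + ipf y u * hff h u y + ipf u y * hff h y u + ipf u u * hff h y y))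
    ?_
  · linear_combination key
  · intro s
    have hz := polar1 H h hflat (x + s • u) y
    simp only [bilf_expand_left, bilf_expand_right, ipf_expand, ipf_expand_left,
      ipf_expand_right, hff_expand, hff_expand_left, hff_expand_right, map_add, map_mul] at hz
    simp only [grp2, Finset.sum_add_distrib, ← Finset.sum_mul] at hz
    linear_combination hz

open ComplexConjugate in
private lemma polar3 {m : ℕ} (H : Fin m → Fin n → Fin n → ℂ) (h : Fin n → Fin n → ℂ)
    (hflat : ∀ z : Fin n → ℂ,
      ∑ α, bilf (H α) z z * conj (bilf (H α) z z) = ipf z z * hff h z z)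
    (u v x y : Fin n → ℂ) :
    ∑ α, (bilf (H α) u v + bilf (H α) v u) * (conj (bilf (H α) x y) + conj (bilf (H α) y x))
      = ipf v y * hff h u x + ipf v x * hff h u y + ipf u y * hff h v x
        + ipf u x * hff h v y := by
  have key := extract10
    ((∑ α, (bilf (H α) u y + bilf (H α) y u) * (conj (bilf (H α) x y) + conj (bilf (H α) y x)))
      - (ipf y y * hff h u x + ipf y x * hff h u y + ipf u y * hff h y x + ipf u x * hff h y y))
    ((∑ α, (bilf (H α) u v + bilf (H α) v u) * (conj (bilf (H α) x y) + conj (bilf (H α) y x)))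
      - (ipf v y * hff h u x + ipf v x * hff h u y + ipf u y * hff h v x + ipf u x * hff h v y))
    ((∑ α, (bilf (H α) u y + bilf (H α) y u) * (conj (bilf (H α) x v) + conj (bilf (H α) v x)))
      - (ipf y v * hff h u x + ipf y x * hff h u v + ipf u v * hff h y x + ipf u x * hff h y v))
    ((∑ α, (bilf (H α) u v + bilf (H α) v u) * (conj (bilf (H α) x v) + conj (bilf (H α) v x)))
      - (ipf v v * hff h u x + ipf v x * hff h u v + ipf u v * hff h v x + ipf u x * hff h v v))
    ?_
  · linear_combination key
  · intro r
    have hz := polar2 H h hflat u x (y + r • v)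
    simp only [bilf_expand_left, bilf_expand_right, ipf_expand, ipf_expand_left,
      ipf_expand_right, hff_expand, hff_expand_left, hff_expand_right, map_add, map_mul] at hz
    simp only [grp2, Finset.sum_add_distrib, ← Finset.sum_mul] at hz
    linear_combination hz



private lemma ipf_smul_left (x y : Fin n → ℂ) (s : ℂ) :
    ipf (s • x) y = s * ipf x y := by
  unfold ipf
  rw [Finset.mul_sum]
  exact Finset.sum_congr rfl fun i _ => by simp only [Pi.smul_apply, smul_eq_mul]; ring

private lemma hff_add_add (M : Fin n → Fin n → ℂ) (x u y v : Fin n → ℂ) :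
    hff M (x + u) (y + v) = hff M x y + hff M u y + hff M x v + hff M u v := by
  have := hff_expand M x u y v 1 1
  simpa using this

private lemma hff_smul_left (M : Fin n → Fin n → ℂ) (x y : Fin n → ℂ) (s : ℂ) :
    hff M (s • x) y = s * hff M x y := by
  unfold hff
  rw [Finset.mul_sum]
  refine Finset.sum_congr rfl fun i _ => ?_
  rw [Finset.mul_sum]
  exact Finset.sum_congr rfl fun j _ => by simp only [Pi.smul_apply, smul_eq_mul]; ring

private lemma hff_smul_right (M : Fin n → Fin n → ℂ) (x y : Fin n → ℂ) (s : ℂ) :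
    hff M x (s • y) = (starRingEnd ℂ) s * hff M x y := by
  unfold hff
  rw [Finset.mul_sum]
  refine Finset.sum_congr rfl fun i _ => ?_
  rw [Finset.mul_sum]
  refine Finset.sum_congr rfl fun j _ => ?_
  simp only [Pi.smul_apply, smul_eq_mul, map_mul]
  ring

private lemma hff_single (M : Fin n → Fin n → ℂ) (i j : Fin n) :
    hff M (Pi.single i 1) (Pi.single j 1) = M i j := by
  unfold hff
  rw [Finset.sum_eq_single i]
  · rw [Finset.sum_eq_single j]
    · simp
    · intro b _ hb; simp [Pi.single_apply, hb]
    · simp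
  · intro a _ ha
    rw [Finset.sum_eq_single j]
    · simp [Pi.single_apply, ha]
    · intro b _ hb; simp [Pi.single_apply, hb]
    · simp
  · simp

private lemma two_mul_card_triangle (γ : Type*) [Fintype γ] [LinearOrder γ] :
    2 * (Finset.univ.filter fun p : γ × γ => p.1 ≤ p.2).card
      = Fintype.card γ * Fintype.card γ + Fintype.card γ := by
  classical
  have hswap : (Finset.univ.filter fun p : γ × γ => p.1 ≤ p.2).card
      = (Finset.univ.filter fun p : γ × γ => p.2 ≤ p.1).card := by
    refine Finset.card_bij' (fun p _ => (p.2, p.1)) (fun p _ => (p.2, p.1)) ?_ ?_ ?_ ?_ <;>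
      simp
  have hkey := Finset.card_union_add_card_inter
    (Finset.univ.filter fun p : γ × γ => p.1 ≤ p.2)
    (Finset.univ.filter fun p : γ × γ => p.2 ≤ p.1)
  rw [← Finset.filter_or, ← Finset.filter_and] at hkey
  have h1 : (Finset.univ.filter fun p : γ × γ => p.1 ≤ p.2 ∨ p.2 ≤ p.1) = Finset.univ := by
    refine Finset.filter_true_of_mem fun p _ => le_total p.1 p.2
  have h2 : (Finset.univ.filter fun p : γ × γ => p.1 ≤ p.2 ∧ p.2 ≤ p.1).card
      = Fintype.card γ := by
    rw [← Finset.card_univ]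
    refine Finset.card_bij' (fun p _ => p.1) (fun a _ => (a, a)) ?_ ?_ ?_ ?_
    · intro p _; exact Finset.mem_univ _
    · intro a _; simp
    · intro p hp
      have h := (Finset.mem_filter.mp hp).2
      have : p.1 = p.2 := le_antisymm h.1 h.2
      exact Prod.ext rfl this
    · intro a _; rfl
  rw [h1, h2] at hkey
  simp only [Finset.card_univ, Fintype.card_prod] at hkey
  omega



open ComplexConjugate in
private lemma main (n m : ℕ) (H : Fin m → Fin n → Fin n → ℂ)
    (hflat : ∃ h : Fin n → Fin n → ℂ, ∀ z : Fin n → ℂ,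
      ∑ α, (∑ i, ∑ j, H α i j * z i * z j)
          * (starRingEnd ℂ) (∑ k, ∑ l, H α k l * z k * z l)
        = (∑ k, z k * (starRingEnd ℂ) (z k))
          * (∑ i, ∑ j, h i j * z i * (starRingEnd ℂ) (z j)))
    (S : Submodule ℂ (Fin n → ℂ))
    (hS : (S : Set (Fin n → ℂ)) = {v | ∀ α, ∑ i, ∑ j, H α i j * v i * v j = 0})
    (k : ℕ) (hk : k = n - Module.finrank ℂ S) :
    2 * m ≥ k * (2 * n - k + 1) := by
  classical
  obtain ⟨h, hflat0⟩ := hflat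
  have hflat' : ∀ z : Fin n → ℂ,
      ∑ α, bilf (H α) z z * conj (bilf (H α) z z) = ipf z z * hff h z z :=
    fun z => hflat0 z
  -- membership in S
  have hSmem : ∀ v : Fin n → ℂ, v ∈ S ↔ ∀ α, bilf (H α) v v = 0 := by
    intro v
    have : v ∈ (S : Set (Fin n → ℂ)) ↔ v ∈ {v : Fin n → ℂ | ∀ α, ∑ i, ∑ j, H α i j * v i * v j = 0} := by
      rw [hS]
    exact this
  -- the Hermitian matrix
  set N : Matrix (Fin n) (Fin n) ℂ := Matrix.of fun j i => h i j with hNdef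
  have hffN : ∀ u v : Fin n → ℂ, hff h u v = ipf (N.mulVec u) v := by
    intro u v
    unfold hff ipf
    rw [Finset.sum_comm]
    refine Finset.sum_congr rfl fun j _ => ?_
    rw [Matrix.mulVec, dotProduct, Finset.sum_mul]
    exact Finset.sum_congr rfl fun i _ => by simp [hNdef]
  -- ipf self-conjugate and positivity facts
  have ipf_self_real : ∀ z : Fin n → ℂ, ipf z z = ((∑ i, Complex.normSq (z i) : ℝ) : ℂ) := by
    intro z
    unfold ipf
    rw [Complex.ofReal_sum]
    exact Finset.sum_congr rfl fun i _ => (Complex.mul_conj (z i))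
  have lhs_self_conj : ∀ z : Fin n → ℂ,
      (∑ α, bilf (H α) z z * conj (bilf (H α) z z))
        = ((∑ α, Complex.normSq (bilf (H α) z z) : ℝ) : ℂ) := by
    intro z
    rw [Complex.ofReal_sum]
    exact Finset.sum_congr rfl fun α _ => (Complex.mul_conj _)
  -- reality of the form
  have hreal : ∀ z : Fin n → ℂ, conj (hff h z z) = hff h z z := by
    intro z
    by_cases hz : ∀ i, z i = 0
    · have hzz : hff h z z = 0 := by
        unfold hff
        refine Finset.sum_eq_zero fun i _ => Finset.sum_eq_zero fun j _ => ?_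
        rw [hz i]; ring
      rw [hzz]; simp
    · push_neg at hz
      obtain ⟨i0, hi0⟩ := hz
      have hip : ipf z z ≠ 0 := by
        rw [ipf_self_real z, Complex.ofReal_ne_zero]
        have hpos : 0 < ∑ i, Complex.normSq (z i) :=
          Finset.sum_pos' (fun i _ => Complex.normSq_nonneg _)
            ⟨i0, Finset.mem_univ _, Complex.normSq_pos.mpr hi0⟩
        exact ne_of_gt hpos
      have h1 := hflat' z
      have h2 : conj (ipf z z * hff h z z) = ipf z z * hff h z z := by
        rw [← h1, lhs_self_conj z, Complex.conj_ofReal]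
      rw [map_mul] at h2
      have h3 : conj (ipf z z) = ipf z z := by rw [ipf_self_real z, Complex.conj_ofReal]
      rw [h3] at h2
      exact mul_left_cancel₀ hip h2
  -- hermitian property of the sesquilinear form
  have hermA : ∀ x y : Fin n → ℂ,
      conj (hff h x y) + conj (hff h y x) = hff h x y + hff h y x := by
    intro x y
    have e1 := hreal (x + y)
    rw [hff_add_add] at e1
    rw [map_add, map_add, map_add] at e1
    have r1 := hreal x
    have r2 := hreal y
    linear_combination e1 - r1 - r2
  have herm : ∀ x y : Fin n → ℂ, conj (hff h x y) = hff h y x := by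
    intro x y
    have A := hermA x y
    have B := hermA x (Complex.I • y)
    rw [hff_smul_right h x y Complex.I, hff_smul_left h y x Complex.I] at B
    simp only [map_mul, map_neg, neg_neg, Complex.conj_conj, Complex.conj_I] at B
    linear_combination (1/2 : ℂ) * A + (-Complex.I/2) * B
      + ((conj (hff h x y) - conj (hff h y x) + hff h x y - hff h y x)/2) * Complex.I_sq
  have hNherm : N.IsHermitian := by
    rw [Matrix.IsHermitian]
    ext i j
    have hij := herm (Pi.single i 1) (Pi.single j 1)
    rw [hff_single, hff_single] at hij
    rw [Matrix.conjTranspose_apply]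
    show (starRingEnd ℂ) (N j i) = N i j
    simp only [hNdef, Matrix.of_apply]
    exact hij
  -- spectral theory
  set w : Fin n → (EuclideanSpace ℂ (Fin n)) := fun a => hNherm.eigenvectorBasis a with hwdef
  set lam : Fin n → ℝ := hNherm.eigenvalues with hlamdef
  have ipf_inner : ∀ x y : EuclideanSpace ℂ (Fin n),
      ipf x y = (inner (𝕜 := ℂ) y x) := by
    intro x y
    rw [PiLp.inner_apply]
    unfold ipf
    exact Finset.sum_congr rfl fun i _ => by
      simp only [RCLike.inner_apply]
  have ipw : ∀ a b : Fin n, ipf (w a) (w b) = if b = a then 1 else 0 := by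
    intro a b
    rw [ipf_inner]
    exact orthonormal_iff_ite.mp hNherm.eigenvectorBasis.orthonormal b a
  have hffw : ∀ b d : Fin n, hff h (w b) (w d) = (lam b : ℂ) * (if d = b then 1 else 0) := by
    intro b d
    rw [hffN]
    have hmv : N.mulVec (w b) = ((lam b : ℂ)) • (w b : Fin n → ℂ) := by
      have h0 := hNherm.mulVec_eigenvectorBasis b
      funext i
      have hi := congrFun h0 i
      simp only [hwdef, hlamdef]
      simpa [Pi.smul_apply, Complex.real_smul] using hi
    rw [hmv, ipf_smul_left, ipw]
  have lam_eq : ∀ a : Fin n, ((lam a : ℝ) : ℂ)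
      = ((∑ α, Complex.normSq (bilf (H α) (w a) (w a)) : ℝ) : ℂ) := by
    intro a
    have h1 := hflat' (w a)
    rw [lhs_self_conj, ipw a a, hffw a a] at h1
    simp only [if_true, eq_self_iff_true, reduceIte, one_mul, mul_one] at h1
    exact h1.symm
  have lam_real : ∀ a : Fin n, lam a = ∑ α, Complex.normSq (bilf (H α) (w a) (w a)) := by
    intro a
    exact_mod_cast lam_eq a
  have lam_nonneg : ∀ a, 0 ≤ lam a := by
    intro a
    rw [lam_real a]
    exact Finset.sum_nonneg fun α _ => Complex.normSq_nonneg _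
  have lam_zero_mem : ∀ a, lam a = 0 → (w a : Fin n → ℂ) ∈ S := by
    intro a ha
    rw [hSmem]
    intro α
    have h1 : ∑ α, Complex.normSq (bilf (H α) (w a) (w a)) = 0 := by
      rw [← lam_real a, ha]
    have h2 := (Finset.sum_eq_zero_iff_of_nonneg
      (fun α _ => Complex.normSq_nonneg (bilf (H α) (w a) (w a)))).mp h1 α (Finset.mem_univ α)
    exact Complex.normSq_eq_zero.mp h2
  -- c := number of zero eigenvalues is at most finrank S
  have hcard_le : Fintype.card {a : Fin n // lam a = 0} ≤ Module.finrank ℂ S := by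
    have hw_li : LinearIndependent ℂ (fun a : {a : Fin n // lam a = 0} => w a.1) := by
      have h0 := (hNherm.eigenvectorBasis.orthonormal.comp
        (Subtype.val : {a : Fin n // lam a = 0} → Fin n) Subtype.val_injective).linearIndependent
      rw [hwdef]
      exact h0
    have hg : LinearIndependent ℂ
        (fun a : {a : Fin n // lam a = 0} => (⟨w a.1, lam_zero_mem a.1 a.2⟩ : S)) := by
      apply LinearIndependent.of_comp S.subtype
      exact hw_li.map' (WithLp.linearEquiv 2 ℂ (Fin n → ℂ)).toLinearMap (LinearEquiv.ker _)
    exact hg.fintype_card_le_finrank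
  -- Gram identities
  have gram : ∀ a b c d : Fin n,
      (∑ α, (bilf (H α) (w a) (w b) + bilf (H α) (w b) (w a))
        * (conj (bilf (H α) (w c) (w d)) + conj (bilf (H α) (w d) (w c))))
      = ((if c = a then (1:ℂ) else 0) * (if d = b then 1 else 0)
          + (if c = b then (1:ℂ) else 0) * (if d = a then 1 else 0)) * ((lam a : ℂ) + (lam b : ℂ)) := by
    intro a b c d
    have h1 := polar3 H h hflat' (w a) (w b) (w c) (w d)
    rw [ipw b d, ipw b c, ipw a d, ipw a c, hffw a c, hffw a d, hffw b c, hffw b d] at h1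
    rw [h1]
    split_ifs <;> ring
  -- the independent family
  have hindep : LinearIndependent ℂ
      (fun p : {p : Fin n × Fin n // p.1 ≤ p.2 ∧ (lam p.1 ≠ 0 ∨ lam p.2 ≠ 0)} =>
        (fun α => bilf (H α) (w p.1.1) (w p.1.2) + bilf (H α) (w p.1.2) (w p.1.1) : Fin m → ℂ)) := by
    rw [Fintype.linearIndependent_iff]
    intro g hg q
    set D : {p : Fin n × Fin n // p.1 ≤ p.2 ∧ (lam p.1 ≠ 0 ∨ lam p.2 ≠ 0)} → Fin m → ℂ :=
      fun p α => bilf (H α) (w p.1.1) (w p.1.2) + bilf (H α) (w p.1.2) (w p.1.1) with hD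
    have hα : ∀ α, (∑ p, g p * D p α) = 0 := by
      intro α
      have h0 := congrFun hg α
      simpa [Finset.sum_apply, Pi.smul_apply, smul_eq_mul] using h0
    have key : ∑ p, g p * (∑ α, D p α * (conj (bilf (H α) (w q.1.1) (w q.1.2))
        + conj (bilf (H α) (w q.1.2) (w q.1.1)))) = 0 := by
      have e0 : ∀ p : {p : Fin n × Fin n // p.1 ≤ p.2 ∧ (lam p.1 ≠ 0 ∨ lam p.2 ≠ 0)},
          g p * (∑ α, D p α * (conj (bilf (H α) (w q.1.1) (w q.1.2))
            + conj (bilf (H α) (w q.1.2) (w q.1.1))))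
          = ∑ α, (g p * D p α) * (conj (bilf (H α) (w q.1.1) (w q.1.2))
            + conj (bilf (H α) (w q.1.2) (w q.1.1))) := by
        intro p
        rw [Finset.mul_sum]
        exact Finset.sum_congr rfl fun α _ => by ring
      rw [Finset.sum_congr rfl fun p _ => e0 p, Finset.sum_comm]
      refine Finset.sum_eq_zero fun α _ => ?_
      rw [← Finset.sum_mul, hα α, zero_mul]
    have key2 : ∀ p, g p * (∑ α, D p α * (conj (bilf (H α) (w q.1.1) (w q.1.2))
        + conj (bilf (H α) (w q.1.2) (w q.1.1))))
        = g p * (((if q.1.1 = p.1.1 then (1:ℂ) else 0) * (if q.1.2 = p.1.2 then 1 else 0)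
          + (if q.1.1 = p.1.2 then (1:ℂ) else 0) * (if q.1.2 = p.1.1 then 1 else 0))
            * ((lam p.1.1 : ℂ) + (lam p.1.2 : ℂ))) := by
      intro p
      rw [hD]
      have := gram p.1.1 p.1.2 q.1.1 q.1.2
      rw [this]
    rw [Finset.sum_congr rfl fun p _ => key2 p] at key
    rw [Finset.sum_eq_single q] at key
    · have hpos : (0:ℝ) < lam q.1.1 + lam q.1.2 := by
        rcases q.2.2 with hq | hq
        · have := lt_of_le_of_ne (lam_nonneg q.1.1) (Ne.symm hq)
          linarith [lam_nonneg q.1.2]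
        · have := lt_of_le_of_ne (lam_nonneg q.1.2) (Ne.symm hq)
          linarith [lam_nonneg q.1.1]
      have hlam_ne : ((lam q.1.1 : ℂ) + (lam q.1.2 : ℂ)) ≠ 0 := by
        rw [← Complex.ofReal_add, Complex.ofReal_ne_zero]
        exact ne_of_gt hpos
      have hfac : ((if q.1.1 = q.1.1 then (1:ℂ) else 0) * (if q.1.2 = q.1.2 then 1 else 0)
          + (if q.1.1 = q.1.2 then (1:ℂ) else 0) * (if q.1.2 = q.1.1 then 1 else 0)) ≠ 0 := by
        by_cases hqq : q.1.1 = q.1.2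
        · norm_num [hqq]
        · norm_num [hqq, Ne.symm hqq]
      rcases mul_eq_zero.mp key with h' | h'
      · exact h'
      · exact absurd h' (mul_ne_zero hfac hlam_ne)
    · intro p _ hpq
      have hne : q.1 ≠ p.1 := fun hh => hpq (Subtype.ext hh.symm) |>.elim
      have hzero : ((if q.1.1 = p.1.1 then (1:ℂ) else 0) * (if q.1.2 = p.1.2 then 1 else 0)
          + (if q.1.1 = p.1.2 then (1:ℂ) else 0) * (if q.1.2 = p.1.1 then 1 else 0)) = 0 := by
        have case1 : ¬(q.1.1 = p.1.1 ∧ q.1.2 = p.1.2) := fun hh => hne (Prod.ext hh.1 hh.2)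
        have case2 : ¬(q.1.1 = p.1.2 ∧ q.1.2 = p.1.1) := by
          rintro ⟨h3, h4⟩
          have e1 : p.1.1 ≤ p.1.2 := p.2.1
          have e2 : q.1.1 ≤ q.1.2 := q.2.1
          have ha : q.1.1 ≤ p.1.1 := by
            calc q.1.1 ≤ q.1.2 := e2
            _ = p.1.1 := h4
          have hb : p.1.1 ≤ q.1.1 := by
            calc p.1.1 ≤ p.1.2 := e1
            _ = q.1.1 := h3.symm
          have hq1 : q.1.1 = p.1.1 := le_antisymm ha hb
          have hq2 : q.1.2 = p.1.2 := by
            calc q.1.2 = p.1.1 := h4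
            _ = q.1.1 := hq1.symm
            _ = p.1.2 := h3
          exact hne (Prod.ext hq1 hq2)
        rcases not_and_or.mp case1 with h1 | h1 <;> rcases not_and_or.mp case2 with h2 | h2 <;>
          rw [if_neg h1, if_neg h2] <;> ring
      rw [hzero, zero_mul, mul_zero]
    · intro hq
      exact absurd (Finset.mem_univ q) hq
  have hcard_m : Fintype.card {p : Fin n × Fin n // p.1 ≤ p.2 ∧ (lam p.1 ≠ 0 ∨ lam p.2 ≠ 0)} ≤ m := by
    have := hindep.fintype_card_le_finrank
    rwa [Module.finrank_pi, Fintype.card_fin] at this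
  -- counting
  set c := Fintype.card {a : Fin n // lam a = 0} with hcdef
  have htri := two_mul_card_triangle (Fin n)
  have htriZ := two_mul_card_triangle {a : Fin n // lam a = 0}
  rw [Fintype.card_fin] at htri
  have hι : Fintype.card {p : Fin n × Fin n // p.1 ≤ p.2 ∧ (lam p.1 ≠ 0 ∨ lam p.2 ≠ 0)}
      = (Finset.univ.filter fun p : Fin n × Fin n =>
          p.1 ≤ p.2 ∧ (lam p.1 ≠ 0 ∨ lam p.2 ≠ 0)).card := Fintype.card_subtype _
  -- partition of the triangle
  have hsplit : (Finset.univ.filter fun p : Fin n × Fin n =>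
        p.1 ≤ p.2 ∧ (lam p.1 ≠ 0 ∨ lam p.2 ≠ 0)).card
      + (Finset.univ.filter fun p : Fin n × Fin n =>
        p.1 ≤ p.2 ∧ (lam p.1 = 0 ∧ lam p.2 = 0)).card
      = (Finset.univ.filter fun p : Fin n × Fin n => p.1 ≤ p.2).card := by
    have e1 := Finset.card_filter_add_card_filter_not
      (s := Finset.univ.filter fun p : Fin n × Fin n => p.1 ≤ p.2)
      (p := fun p : Fin n × Fin n => (lam p.1 ≠ 0 ∨ lam p.2 ≠ 0))
    rw [Finset.filter_filter, Finset.filter_filter] at e1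
    rw [← e1]
    congr 1
    refine Finset.card_nbij id (fun p hp => ?_) (fun p _ q _ hpq => hpq) (fun p hp => ?_)
    · simp only [Finset.mem_coe, Finset.mem_filter] at hp ⊢
      refine ⟨hp.1, hp.2.1, ?_⟩
      push_neg
      exact hp.2.2
    · refine ⟨p, ?_, rfl⟩
      simp only [Finset.mem_coe, Finset.mem_filter] at hp ⊢
      refine ⟨hp.1, hp.2.1, ?_⟩
      push_neg at hp
      exact hp.2.2
  -- the bad triangle is the triangle of the zero set
  have hbij : (Finset.univ.filter fun p : Fin n × Fin n =>
        p.1 ≤ p.2 ∧ (lam p.1 = 0 ∧ lam p.2 = 0)).card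
      = (Finset.univ.filter fun q : {a : Fin n // lam a = 0} × {a : Fin n // lam a = 0} =>
          q.1 ≤ q.2).card := by
    refine (Finset.card_bij' (fun q _ => (q.1.1, q.2.1))
      (fun p hp => (⟨p.1, ((Finset.mem_filter.mp hp).2.2.1)⟩, ⟨p.2, ((Finset.mem_filter.mp hp).2.2.2)⟩))
      ?_ ?_ ?_ ?_).symm
    · intro q hq
      simp only [Finset.mem_filter, Finset.mem_univ, true_and] at hq ⊢
      exact ⟨hq, q.1.2, q.2.2⟩
    · intro p hp
      simp only [Finset.mem_filter, Finset.mem_univ, true_and] at hp ⊢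
      exact hp.1
    · intro q _
      rfl
    · intro p _
      rfl
  -- final arithmetic
  have hd_le : Module.finrank ℂ S ≤ n := by
    have := Submodule.finrank_le S
    rwa [Module.finrank_pi, Fintype.card_fin] at this
  have hkn : k ≤ n := by omega
  obtain ⟨j, hj⟩ : ∃ j, n = k + j := ⟨n - k, by omega⟩
  have hcj : c ≤ j := by omega
  have hF : k * (k + 2 * j + 1) + (j * j + j) = n * n + n := by
    rw [hj]; ring
  have hG : c * c + c ≤ j * j + j :=
    Nat.add_le_add (Nat.mul_le_mul hcj hcj) hcj
  have hK : k * (2 * n - k + 1) = k * (k + 2 * j + 1) := by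
    congr 1
    omega
  rw [ge_iff_le, hK]
  have hA_le_m : (Finset.univ.filter fun p : Fin n × Fin n =>
      p.1 ≤ p.2 ∧ (lam p.1 ≠ 0 ∨ lam p.2 ≠ 0)).card ≤ m := by
    rw [← hι]; exact hcard_m
  linarith [htri, htriZ, hsplit, hbij, hF, hG, hA_le_m]

end IwataniAux

/-- Iwatani's inequality: if `H` is Bochner-flat and the asymptotic subspace
`{v : H(v,v) = 0}` has complex codimension `k` in `ℂⁿ`, then `m ≥ ½ k (2n − k + 1)`
(stated as `2m ≥ k(2n − k + 1)`). -/
theorem iwatani_inequality (n m : ℕ) (H : Fin m → Fin n → Fin n → ℂ)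
    (hsym : ∀ α i j, H α i j = H α j i)
    (hflat : ∃ h : Fin n → Fin n → ℂ, ∀ z : Fin n → ℂ,
      ∑ α, (∑ i, ∑ j, H α i j * z i * z j)
          * (starRingEnd ℂ) (∑ k, ∑ l, H α k l * z k * z l)
        = (∑ k, z k * (starRingEnd ℂ) (z k))
          * (∑ i, ∑ j, h i j * z i * (starRingEnd ℂ) (z j)))
    (S : Submodule ℂ (Fin n → ℂ))
    (hS : (S : Set (Fin n → ℂ)) = {v | ∀ α, ∑ i, ∑ j, H α i j * v i * v j = 0})
    (k : ℕ) (hk : k = n - Module.finrank ℂ S) :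
    2 * m ≥ k * (2 * n - k + 1) :=
  IwataniAux.main n m H hflat S hS k hk
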